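/- Let G be a group with a finite generating set S and let L ⊆ G. Suppose there exists a finite set X ⊆ G such that for every g ∈ G there is some x ∈ X with g·x ∈ L. Then there exist a real number ε > 0 and a natural number R₀ such that for all natural numbers R > R₀, the cardinality of L ∩ B(R) is greater than ε times the cardinality of B(R), where B(R) is the ball of radius R in the word metric. (Abstract form of the paper's Lemma 'tecnique': the Garside-theoretic hypothesis that g·x is rigid with normal form containing the subword w_a serves only, via the Calvez–Wiest criterion, to guarantee g·x ∈ L.) -/

import Mathlib

open Pointwise

/-- The ball of radius `R` in the word metric on `G` with respect to the finite
generating set `S`: the set of elements expressible as a product of at most `R`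
elements of `S ∪ S⁻¹` (padding with the identity). -/
def wordBall {G : Type*} [Group G] [DecidableEq G] (S : Finset G) (R : ℕ) : Finset G :=
  (S ∪ S⁻¹ ∪ {1}) ^ R

lemma wordBall_mono {G : Type*} [Group G] [DecidableEq G] (S : Finset G) {m n : ℕ}
    (h : m ≤ n) : wordBall S m ⊆ wordBall S n :=
  Finset.pow_subset_pow_right (by simp [Finset.mem_union]) h

lemma exists_mem_wordBall {G : Type*} [Group G] [DecidableEq G] (S : Finset G)
    (hS : Subgroup.closure (S : Set G) = ⊤) (g : G) : ∃ n : ℕ, g ∈ wordBall S n := by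
  have hg : g ∈ Submonoid.closure ((S : Set G) ∪ (S : Set G)⁻¹) := by
    rw [← Subgroup.closure_toSubmonoid, hS]
    exact Subgroup.mem_top g
  obtain ⟨l, hl, hprod⟩ := Submonoid.exists_list_of_mem_closure hg
  refine ⟨l.length, ?_⟩
  rw [← hprod, wordBall]
  clear hprod hg
  induction l with
  | nil => simp
  | cons a t ih =>
      rw [List.prod_cons, List.length_cons, pow_succ']
      refine Finset.mul_mem_mul ?_ (ih fun x hx => hl x (List.mem_cons_of_mem _ hx))
      have ha := hl a List.mem_cons_self
      simp only [Finset.mem_union, Finset.mem_singleton]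
      rcases ha with h | h
      · exact Or.inl (Or.inl h)
      · exact Or.inl (Or.inr (by simpa using h))

/-- If there is a finite set `X ⊆ G` such that every `g ∈ G`
admits some `x ∈ X` with `g · x ∈ L`, then there are `ε > 0` and `R₀` such that
for all `R > R₀`, `|L ∩ B(R)| > ε · |B(R)|`. -/
theorem exists_eps_card_inter_gt {G : Type*} [Group G] [DecidableEq G]
    (S : Finset G) (hS : Subgroup.closure (S : Set G) = ⊤) (L : Set G)
    (hX : ∃ X : Finset G, ∀ g : G, ∃ x ∈ X, g * x ∈ L) :
    ∃ ε : ℝ, 0 < ε ∧ ∃ R₀ : ℕ, ∀ R : ℕ, R₀ < R →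
      ε * ((wordBall S R).card : ℝ) < ((L ∩ (wordBall S R : Set G)).ncard : ℝ) := by
  obtain ⟨X, hXL⟩ := hX
  -- a radius D such that X ⊆ B(D)
  choose f hf using exists_mem_wordBall S hS
  set D : ℕ := X.sup f with hD
  have hXD : ∀ x ∈ X, x ∈ wordBall S D := fun x hx =>
    wordBall_mono S (Finset.le_sup hx) (hf x)
  set K : ℕ := X.card * (wordBall S D).card + 1 with hK
  refine ⟨1 / K, by positivity, D, fun R hR => ?_⟩
  -- finite intersection
  have hfin : (L ∩ (wordBall S R : Set G)).Finite :=
    Set.Finite.inter_of_right (wordBall S R).finite_toSet L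
  set F : Finset G := hfin.toFinset with hF
  have hncard : (L ∩ (wordBall S R : Set G)).ncard = F.card := by
    rw [Set.ncard_eq_toFinset_card _ hfin]
  -- key counting: B(R-D) ⊆ ⋃_{x∈X} F * x⁻¹
  have hcover : wordBall S (R - D) ⊆ X.biUnion (fun x => F.image (· * x⁻¹)) := by
    intro g hg
    obtain ⟨x, hx, hgx⟩ := hXL g
    refine Finset.mem_biUnion.2 ⟨x, hx, Finset.mem_image.2 ⟨g * x, ?_, by group⟩⟩
    rw [hF, Set.Finite.mem_toFinset]
    refine ⟨hgx, ?_⟩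
    have : g * x ∈ wordBall S (R - D) * wordBall S D := Finset.mul_mem_mul hg (hXD x hx)
    have heq : wordBall S (R - D) * wordBall S D = wordBall S R := by
      rw [wordBall, wordBall, wordBall, ← pow_add, Nat.sub_add_cancel hR.le]
    rw [heq] at this
    exact this
  have hcount : (wordBall S (R - D)).card ≤ X.card * F.card := by
    calc (wordBall S (R - D)).card ≤ (X.biUnion (fun x => F.image (· * x⁻¹))).card :=
          Finset.card_le_card hcover
      _ ≤ ∑ x ∈ X, (F.image (· * x⁻¹)).card := Finset.card_biUnion_le
      _ ≤ ∑ _x ∈ X, F.card := Finset.sum_le_sum fun x _ => Finset.card_image_le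
      _ = X.card * F.card := by rw [Finset.sum_const, smul_eq_mul]
  -- B(R) ⊆ B(R-D) * B(D)
  have hball : (wordBall S R).card ≤ (wordBall S (R - D)).card * (wordBall S D).card := by
    have heq : wordBall S (R - D) * wordBall S D = wordBall S R := by
      rw [wordBall, wordBall, wordBall, ← pow_add, Nat.sub_add_cancel hR.le]
    calc (wordBall S R).card = (wordBall S (R - D) * wordBall S D).card := by rw [heq]
      _ ≤ _ := Finset.card_mul_le
  -- F is nonempty
  have hFpos : 1 ≤ F.card := by
    obtain ⟨x, hx, hgx⟩ := hXL 1
    have hxB : x ∈ wordBall S R := wordBall_mono S hR.le (hXD x hx)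
    have : x ∈ F := by
      rw [hF, Set.Finite.mem_toFinset]
      exact ⟨by simpa using hgx, hxB⟩
    exact Finset.card_pos.2 ⟨x, this⟩
  -- combine
  have hmain : (wordBall S R).card < K * F.card := by
    calc (wordBall S R).card ≤ (wordBall S (R - D)).card * (wordBall S D).card := hball
      _ ≤ X.card * F.card * (wordBall S D).card := Nat.mul_le_mul_right _ hcount
      _ = (X.card * (wordBall S D).card) * F.card := by ring
      _ < K * F.card := mul_lt_mul_of_pos_right (by omega) (by omega)
  rw [hncard]
  have hKpos : (0 : ℝ) < K := by positivity
  rw [div_mul_eq_mul_div, div_lt_iff₀ hKpos, one_mul]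
  calc ((wordBall S R).card : ℝ) < (K * F.card : ℕ) := by exact_mod_cast hmain
    _ = (F.card : ℝ) * K := by push_cast; ring
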